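/- arXiv:2604.04649 — 3 statements merged into one kernel-verified Lean document; each statement's English description precedes it below -/
import Mathlib

section
/- (Hardy–Littlewood rearrangement upper bound) Let X be a random variable and μ a probability distribution on ℝ. Then sup over all random variables Y with distribution μ of E[XY] equals ∫_0^1 Q_X(p) Q_μ(p) dp, provided the relevant integrals are well-defined, and the supremum is attained by any Y ~ μ comonotonic with X. -/
open MeasureTheory Set Filter Topology

/-- Right-continuous quantile function of a random variable `X` under `P`. -/
noncomputable def quantile {Ω : Type*} [MeasurableSpace Ω] (P : Measure Ω) (X : Ω → ℝ)
    (p : ℝ) : ℝ :=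
  sInf {z : ℝ | p < (P {ω | X ω ≤ z}).toReal}

/-- Quantile function of a probability distribution `μ` on `ℝ`. -/
noncomputable def quantileM (μ : Measure ℝ) (p : ℝ) : ℝ := quantile μ id p

/-- `X` and `Y` are comonotonic: `(X(ω)−X(ω'))·(Y(ω)−Y(ω')) ≥ 0` for a.e. pair. -/
def Comonotone {Ω : Type*} [MeasurableSpace Ω] (P : Measure Ω) (X Y : Ω → ℝ) : Prop :=
  ∀ᵐ ω ∂P, ∀ᵐ ω' ∂P, 0 ≤ (X ω - X ω') * (Y ω - Y ω')

/-! ### Auxiliary: the layer function `phi` -/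

noncomputable def phi (x s : ℝ) : ℝ := (if s < x then 1 else 0) - (if s < 0 then 1 else 0)
noncomputable def cneg (s : ℝ) : ℝ := if s < 0 then 1 else 0

lemma phi_nonneg (x : ℝ) (hx : 0 ≤ x) : phi x = (Set.Ico (0:ℝ) x).indicator (fun _ => (1:ℝ)) := by
  funext s
  rcases lt_or_ge s 0 with h2 | h2 <;> rcases lt_or_ge s x with h1 | h1
  · simp [phi, Set.indicator_apply, Set.mem_Ico, h1, h2, not_le.mpr h2]
  · exfalso; linarith
  · simp [phi, Set.indicator_apply, Set.mem_Ico, h1, h2, not_lt.mpr h2]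
  · simp [phi, Set.indicator_apply, Set.mem_Ico, not_lt.mpr h1, not_lt.mpr h2]

lemma phi_nonpos (x : ℝ) (hx : x ≤ 0) : phi x = fun s => -(Set.Ico x (0:ℝ)).indicator (fun _ => (1:ℝ)) s := by
  funext s
  rcases lt_or_ge s 0 with h2 | h2 <;> rcases lt_or_ge s x with h1 | h1
  · simp [phi, Set.indicator_apply, Set.mem_Ico, h1, h2, not_le.mpr h1]
  · simp [phi, Set.indicator_apply, Set.mem_Ico, not_lt.mpr h1, h1, h2]
  · exfalso; linarith
  · simp [phi, Set.indicator_apply, Set.mem_Ico, not_lt.mpr h1, not_lt.mpr h2]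

lemma phi_abs (x : ℝ) : (fun s => |phi x s|) =
    ((Set.Ico (min 0 x) (max 0 x)).indicator (fun _ => (1:ℝ))) := by
  rcases le_total 0 x with hx | hx
  · rw [min_eq_left hx, max_eq_right hx]
    funext s; rw [phi_nonneg x hx]
    simp only [Set.indicator]; split <;> simp
  · rw [min_eq_right hx, max_eq_left hx]
    funext s; rw [phi_nonpos x hx]
    simp only [Set.indicator]; split <;> simp

lemma phi_integrable (x : ℝ) : Integrable (phi x) volume := by
  rcases le_total 0 x with hx | hx
  · rw [phi_nonneg x hx]
    exact (integrable_indicator_iff measurableSet_Ico).mpr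
      (integrableOn_const (ne_of_lt (by rw [Real.volume_Ico]; exact ENNReal.ofReal_lt_top)))
  · rw [phi_nonpos x hx]
    exact ((integrable_indicator_iff measurableSet_Ico).mpr
      (integrableOn_const (ne_of_lt (by rw [Real.volume_Ico]; exact ENNReal.ofReal_lt_top)))).neg

lemma phi_integral (x : ℝ) : ∫ s, phi x s = x := by
  rcases le_total 0 x with hx | hx
  · rw [phi_nonneg x hx, integral_indicator_const _ measurableSet_Ico]
    simp [Real.volume_Ico, ENNReal.toReal_ofReal hx, hx]
  · rw [phi_nonpos x hx]
    rw [integral_neg, integral_indicator_const _ measurableSet_Ico]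
    simp only [measureReal_def, Real.volume_Ico, smul_eq_mul, mul_one]
    rw [ENNReal.toReal_ofReal (by linarith)]
    ring

lemma phi_abs_integral (x : ℝ) : ∫ s, |phi x s| = |x| := by
  rw [phi_abs x, integral_indicator_const _ measurableSet_Ico]
  simp only [measureReal_def, Real.volume_Ico, smul_eq_mul, mul_one]
  rcases le_total 0 x with h | h
  · rw [min_eq_left h, max_eq_right h, ENNReal.toReal_ofReal (by linarith), abs_of_nonneg h]
    ring
  · rw [min_eq_right h, max_eq_left h, ENNReal.toReal_ofReal (by linarith), abs_of_nonpos h]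
    ring

lemma phi_measurable : Measurable (fun q : ℝ × ℝ => phi q.1 q.2) := by
  unfold phi
  exact (Measurable.ite (measurableSet_lt measurable_snd measurable_fst)
      measurable_const measurable_const).sub
    (Measurable.ite (measurableSet_lt measurable_snd measurable_const)
      measurable_const measurable_const)

/-! ### Core probabilistic pieces -/

section pieces
variable {Ω : Type*} [MeasurableSpace Ω] {P : Measure Ω} [IsProbabilityMeasure P]
variable {X Y : Ω → ℝ}

lemma K_formula (hX : Measurable X) (hY : Measurable Y) (s t : ℝ) :
    ∫ ω, phi (X ω) s * phi (Y ω) t ∂P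
      = (P ({ω | s < X ω} ∩ {ω | t < Y ω})).toReal
        - cneg s * (P {ω | t < Y ω}).toReal - cneg t * (P {ω | s < X ω}).toReal
        + cneg s * cneg t := by
  have hA : MeasurableSet {ω | s < X ω} := measurableSet_lt measurable_const hX
  have hB : MeasurableSet {ω | t < Y ω} := measurableSet_lt measurable_const hY
  have hpt : ∀ ω, phi (X ω) s * phi (Y ω) t
      = ({ω | s < X ω} ∩ {ω | t < Y ω}).indicator (fun _ => (1:ℝ)) ω
        - cneg s * ({ω | t < Y ω}).indicator (fun _ => (1:ℝ)) ω
        - cneg t * ({ω | s < X ω}).indicator (fun _ => (1:ℝ)) ω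
        + cneg s * cneg t := by
    intro ω
    by_cases h1 : s < X ω <;> by_cases h2 : t < Y ω <;>
      simp [phi, cneg, Set.indicator_apply, Set.mem_inter_iff, Set.mem_setOf_eq, h1, h2] <;>
      (try (split_ifs <;> ring))
  have iInd : ∀ {S : Set Ω}, MeasurableSet S → Integrable (S.indicator (fun _ => (1:ℝ))) P := by
    intro S hS
    exact (integrable_indicator_iff hS).mpr
      (integrableOn_const (measure_lt_top P S).ne)
  calc ∫ ω, phi (X ω) s * phi (Y ω) t ∂P
      = ∫ ω, (({ω | s < X ω} ∩ {ω | t < Y ω}).indicator (fun _ => (1:ℝ)) ω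
        - cneg s * ({ω | t < Y ω}).indicator (fun _ => (1:ℝ)) ω
        - cneg t * ({ω | s < X ω}).indicator (fun _ => (1:ℝ)) ω
        + cneg s * cneg t) ∂P := integral_congr_ae (Eventually.of_forall hpt)
    _ = (P ({ω | s < X ω} ∩ {ω | t < Y ω})).toReal
        - cneg s * (P {ω | t < Y ω}).toReal - cneg t * (P {ω | s < X ω}).toReal
        + cneg s * cneg t := by
        have i1 : Integrable (({ω | s < X ω} ∩ {ω | t < Y ω}).indicator (fun _ => (1:ℝ))) P :=
          iInd (hA.inter hB)
        have i2 : Integrable (fun ω => cneg s * ({ω | t < Y ω}).indicator (fun _ => (1:ℝ)) ω) P :=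
          (iInd hB).const_mul (cneg s)
        have i3 : Integrable (fun ω => cneg t * ({ω | s < X ω}).indicator (fun _ => (1:ℝ)) ω) P :=
          (iInd hA).const_mul (cneg t)
        have i12 : Integrable (fun ω => ({ω | s < X ω} ∩ {ω | t < Y ω}).indicator (fun _ => (1:ℝ)) ω
            - cneg s * ({ω | t < Y ω}).indicator (fun _ => (1:ℝ)) ω) P := i1.sub i2
        have i123 : Integrable (fun ω => ({ω | s < X ω} ∩ {ω | t < Y ω}).indicator (fun _ => (1:ℝ)) ω
            - cneg s * ({ω | t < Y ω}).indicator (fun _ => (1:ℝ)) ω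
            - cneg t * ({ω | s < X ω}).indicator (fun _ => (1:ℝ)) ω) P := i12.sub i3
        rw [integral_add i123 (integrable_const (cneg s * cneg t)),
            integral_sub i12 i3, integral_sub i1 i2,
            integral_const_mul, integral_const_mul,
            integral_indicator_const _ (hA.inter hB), integral_indicator_const _ hB,
            integral_indicator_const _ hA, integral_const]
        simp [mul_comm, measureReal_def]

lemma fubini_phi (hX : Measurable X) (hY : Measurable Y)
    (hXY : Integrable (fun ω => X ω * Y ω) P) :
    Integrable (fun q : ℝ × ℝ => ∫ ω, phi (X ω) q.1 * phi (Y ω) q.2 ∂P)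
      (volume.prod volume) ∧
    ∫ ω, X ω * Y ω ∂P
      = ∫ (q : ℝ × ℝ), (∫ ω, phi (X ω) q.1 * phi (Y ω) q.2 ∂P) ∂(volume.prod volume) := by
  have hFmeas : Measurable (fun z : Ω × (ℝ × ℝ) => phi (X z.1) z.2.1 * phi (Y z.1) z.2.2) :=
    (phi_measurable.comp ((hX.comp measurable_fst).prodMk (measurable_fst.comp measurable_snd))).mul
      (phi_measurable.comp ((hY.comp measurable_fst).prodMk (measurable_snd.comp measurable_snd)))
  have hFint : Integrable (fun z : Ω × (ℝ × ℝ) => phi (X z.1) z.2.1 * phi (Y z.1) z.2.2)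
      (P.prod (volume.prod volume)) := by
    rw [integrable_prod_iff hFmeas.aestronglyMeasurable]
    constructor
    · exact Eventually.of_forall fun ω =>
        (phi_integrable (X ω)).mul_prod (phi_integrable (Y ω))
    · have heq : (fun ω => ∫ (q : ℝ × ℝ), ‖phi (X ω) q.1 * phi (Y ω) q.2‖ ∂(volume.prod volume))
          = fun ω => |X ω| * |Y ω| := by
        funext ω
        calc ∫ (q : ℝ × ℝ), ‖phi (X ω) q.1 * phi (Y ω) q.2‖ ∂(volume.prod volume)
            = ∫ (q : ℝ × ℝ), |phi (X ω) q.1| * |phi (Y ω) q.2| ∂(volume.prod volume) := by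
              simp [Real.norm_eq_abs, abs_mul]
          _ = (∫ s, |phi (X ω) s|) * (∫ t, |phi (Y ω) t|) :=
              integral_prod_mul (f := fun s => |phi (X ω) s|) (g := fun t => |phi (Y ω) t|)
          _ = |X ω| * |Y ω| := by rw [phi_abs_integral, phi_abs_integral]
      rw [heq]
      exact hXY.abs.congr (Eventually.of_forall fun ω => by simp [abs_mul])
  refine ⟨hFint.integral_prod_right, ?_⟩
  have swap := integral_integral_swap (f := fun (ω : Ω) (q : ℝ × ℝ) => phi (X ω) q.1 * phi (Y ω) q.2) hFint
  calc ∫ ω, X ω * Y ω ∂P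
      = ∫ ω, ∫ (q : ℝ × ℝ), phi (X ω) q.1 * phi (Y ω) q.2 ∂(volume.prod volume) ∂P := by
        congr 1; funext ω
        rw [integral_prod_mul (f := phi (X ω)) (g := phi (Y ω)) (μ := volume) (ν := volume),
          phi_integral, phi_integral]
    _ = ∫ (q : ℝ × ℝ), (∫ ω, phi (X ω) q.1 * phi (Y ω) q.2 ∂P) ∂(volume.prod volume) := swap

lemma comonotone_inter (hX : Measurable X) (hY : Measurable Y) (h : Comonotone P X Y)
    (s t : ℝ) :
    P ({ω | s < X ω} ∩ {ω | t < Y ω}) = min (P {ω | s < X ω}) (P {ω | t < Y ω}) := by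
  set A := {ω | s < X ω} with hAdef
  set B := {ω | t < Y ω} with hBdef
  have hA : MeasurableSet A := measurableSet_lt measurable_const hX
  have hB : MeasurableSet B := measurableSet_lt measurable_const hY
  have hset : MeasurableSet {z : Ω × Ω | (X z.1 - X z.2) * (Y z.1 - Y z.2) < 0} :=
    measurableSet_lt
      (((((hX.comp measurable_fst).sub (hX.comp measurable_snd)).mul
        ((hY.comp measurable_fst).sub (hY.comp measurable_snd)))))
      measurable_const
  have hnull : (P.prod P) {z : Ω × Ω | (X z.1 - X z.2) * (Y z.1 - Y z.2) < 0} = 0 := by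
    rw [Measure.measure_prod_null hset]
    filter_upwards [h] with ω hω
    rw [Pi.zero_apply]
    rw [ae_iff] at hω
    convert hω using 2
    ext ω'
    simp [not_le]
  have key : P (A ∩ Bᶜ) = 0 ∨ P (Aᶜ ∩ B) = 0 := by
    have hsub : (P.prod P) ((A ∩ Bᶜ) ×ˢ (Aᶜ ∩ B)) = 0 := by
      apply measure_mono_null _ hnull
      rintro ⟨ω, ω'⟩ ⟨⟨h1, h2⟩, h3, h4⟩
      simp only [hAdef, hBdef, Set.mem_setOf_eq, Set.mem_compl_iff, not_lt] at h1 h2 h3 h4 ⊢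
      have hx : 0 < X ω - X ω' := by linarith
      have hy : Y ω - Y ω' < 0 := by linarith
      exact mul_neg_of_pos_of_neg hx hy
    rw [Measure.prod_prod] at hsub
    exact mul_eq_zero.mp hsub
  rcases key with h0 | h0
  · have h1 : P (A ∩ B) = P A := by
      have := measure_inter_add_diff A hB (μ := P)
      rw [Set.diff_eq, h0, add_zero] at this
      exact this
    have h2 : P A ≤ P B := h1 ▸ measure_mono Set.inter_subset_right
    rw [h1, min_eq_left h2]
  · have h1 : P (A ∩ B) = P B := by
      have h2 := measure_inter_add_diff B hA (μ := P)
      rw [Set.inter_comm] at h0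
      rw [Set.diff_eq, h0, add_zero, Set.inter_comm] at h2
      exact h2
    have h2 : P B ≤ P A := h1 ▸ measure_mono Set.inter_subset_left
    rw [h1, min_eq_right h2]

end pieces

/-! ### The master comparison lemma -/

lemma master {Ω Ω' : Type*} [MeasurableSpace Ω] [MeasurableSpace Ω']
    (P : Measure Ω) (P' : Measure Ω') [IsProbabilityMeasure P] [IsProbabilityMeasure P']
    {X Y : Ω → ℝ} {X' Y' : Ω' → ℝ}
    (hX : Measurable X) (hY : Measurable Y) (hX' : Measurable X') (hY' : Measurable Y')
    (hmX : ∀ s, P {ω | s < X ω} = P' {ω | s < X' ω})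
    (hmY : ∀ t, P {ω | t < Y ω} = P' {ω | t < Y' ω})
    (hco' : Comonotone P' X' Y')
    (hXY : Integrable (fun ω => X ω * Y ω) P)
    (hXY' : Integrable (fun ω => X' ω * Y' ω) P') :
    (∫ ω, X ω * Y ω ∂P ≤ ∫ ω, X' ω * Y' ω ∂P') ∧
      (Comonotone P X Y → ∫ ω, X ω * Y ω ∂P = ∫ ω, X' ω * Y' ω ∂P') := by
  obtain ⟨int1, rep1⟩ := fubini_phi hX hY hXY
  obtain ⟨int2, rep2⟩ := fubini_phi hX' hY' hXY'
  have hminle : ∀ s t : ℝ, (P ({ω | s < X ω} ∩ {ω | t < Y ω})).toReal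
      ≤ (min (P {ω | s < X ω}) (P {ω | t < Y ω})).toReal := by
    intro s t
    apply ENNReal.toReal_mono
    · exact ne_of_lt (lt_of_le_of_lt (min_le_left _ _) (measure_lt_top _ _))
    · exact le_min (measure_mono Set.inter_subset_left) (measure_mono Set.inter_subset_right)
  have hle : ∀ q : ℝ × ℝ, (∫ ω, phi (X ω) q.1 * phi (Y ω) q.2 ∂P)
      ≤ ∫ ω, phi (X' ω) q.1 * phi (Y' ω) q.2 ∂P' := by
    intro q
    rw [K_formula hX hY q.1 q.2, K_formula hX' hY' q.1 q.2,
      comonotone_inter hX' hY' hco' q.1 q.2, ← hmX q.1, ← hmY q.2]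
    have := hminle q.1 q.2
    linarith
  constructor
  · rw [rep1, rep2]
    exact integral_mono int1 int2 hle
  · intro hco
    rw [rep1, rep2]
    congr 1
    funext q
    rw [K_formula hX hY q.1 q.2, K_formula hX' hY' q.1 q.2,
      comonotone_inter hX' hY' hco' q.1 q.2, comonotone_inter hX hY hco q.1 q.2,
      ← hmX q.1, ← hmY q.2]

/-! ### Quantile function facts -/

section quantile
variable {Ω : Type*} [MeasurableSpace Ω] (P : Measure Ω) [IsProbabilityMeasure P]
variable {X : Ω → ℝ} (hX : Measurable X)

lemma F_mono : Monotone (fun z => (P {ω | X ω ≤ z}).toReal) := fun z z' h =>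
  ENNReal.toReal_mono (measure_ne_top _ _)
    (measure_mono (fun ω (hω : X ω ≤ z) => le_trans hω h))

lemma F_le_one (z : ℝ) : (P {ω | X ω ≤ z}).toReal ≤ 1 := by
  have := ENNReal.toReal_mono (b := 1) ENNReal.one_ne_top (prob_le_one (μ := P) (s := {ω | X ω ≤ z}))
  simpa using this

lemma quantile_set_nonempty {p : ℝ} (hp : p < 1) :
    {z : ℝ | p < (P {ω | X ω ≤ z}).toReal}.Nonempty := by
  rcases lt_or_ge p 0 with h0 | h0
  · exact ⟨0, lt_of_lt_of_le h0 ENNReal.toReal_nonneg⟩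
  by_contra hne
  push_neg at hne
  simp only [Set.not_nonempty_iff_eq_empty, Set.eq_empty_iff_forall_notMem,
    Set.mem_setOf_eq, not_lt] at hne
  have hu : (⋃ n : ℕ, {ω | X ω ≤ (n : ℝ)}) = Set.univ := by
    ext ω
    simp only [Set.mem_iUnion, Set.mem_setOf_eq, Set.mem_univ, iff_true]
    obtain ⟨n, hn⟩ := exists_nat_ge (X ω)
    exact ⟨n, hn⟩
  have hmon : Monotone (fun n : ℕ => {ω | X ω ≤ (n : ℝ)}) := by
    intro n m hnm ω (hω : X ω ≤ (n:ℝ))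
    exact le_trans hω (by exact_mod_cast Nat.cast_le.mpr hnm)
  have h1 : P Set.univ = ⨆ n : ℕ, P {ω | X ω ≤ (n : ℝ)} := by
    rw [← hu]; exact hmon.measure_iUnion
  have h2 : (⨆ n : ℕ, P {ω | X ω ≤ (n : ℝ)}) ≤ ENNReal.ofReal p := by
    apply iSup_le
    intro n
    rw [← ENNReal.ofReal_toReal (measure_ne_top P _)]
    exact ENNReal.ofReal_le_ofReal (hne n)
  rw [measure_univ] at h1
  have : (1 : ENNReal) < 1 :=
    lt_of_le_of_lt (h1 ▸ h2) (ENNReal.ofReal_lt_one.mpr hp)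
  exact absurd this (lt_irrefl _)

lemma quantile_set_bddBelow (hX : Measurable X) {p : ℝ} (hp : 0 < p) :
    BddBelow {z : ℝ | p < (P {ω | X ω ≤ z}).toReal} := by
  have hT : Tendsto (fun n : ℕ => P {ω | X ω ≤ -(n : ℝ)}) atTop
      (𝓝 (P (⋂ n : ℕ, {ω | X ω ≤ -(n : ℝ)}))) := by
    refine tendsto_measure_iInter_atTop
      (fun n => (measurableSet_le hX measurable_const).nullMeasurableSet) ?_
      ⟨0, measure_ne_top _ _⟩
    intro n m hnm ω (hω : X ω ≤ -(m:ℝ))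
    exact le_trans hω (by exact_mod_cast neg_le_neg (Nat.cast_le.mpr hnm))
  have hempty : (⋂ n : ℕ, {ω | X ω ≤ -(n : ℝ)}) = ∅ := by
    ext ω
    simp only [Set.mem_iInter, Set.mem_setOf_eq, Set.mem_empty_iff_false, iff_false, not_forall,
      not_le]
    obtain ⟨n, hn⟩ := exists_nat_gt (-X ω)
    exact ⟨n, by linarith⟩
  rw [hempty, measure_empty] at hT
  have hev : ∀ᶠ n : ℕ in atTop, P {ω | X ω ≤ -(n : ℝ)} < ENNReal.ofReal p :=
    hT.eventually_lt_const (by simp [hp])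
  obtain ⟨n, hn⟩ := hev.exists
  refine ⟨-(n : ℝ), fun z hz => ?_⟩
  simp only [Set.mem_setOf_eq] at hz
  by_contra hc
  push_neg at hc
  have h1 : (P {ω | X ω ≤ z}).toReal < p :=
    lt_of_le_of_lt
      (ENNReal.toReal_mono (measure_ne_top _ _)
        (measure_mono (fun ω (hω : X ω ≤ z) => le_trans hω (le_of_lt hc))))
      ((ENNReal.lt_ofReal_iff_toReal_lt (measure_ne_top _ _)).mp hn)
  linarith

lemma quantile_le_of_lt (hX : Measurable X) {p z : ℝ} (hp : 0 < p) (h : p < (P {ω | X ω ≤ z}).toReal) :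
    quantile P X p ≤ z :=
  csInf_le (quantile_set_bddBelow P hX hp) h

lemma le_of_quantile_le (hX : Measurable X) {p z : ℝ} (hp : 0 < p) (hp1 : p < 1) (h : quantile P X p ≤ z) :
    p ≤ (P {ω | X ω ≤ z}).toReal := by
  have hne := quantile_set_nonempty P (X := X) hp1
  have step : ∀ z', z < z' → p < (P {ω | X ω ≤ z'}).toReal := by
    intro z' hz'
    obtain ⟨w, hw, hwz⟩ := exists_lt_of_csInf_lt hne (lt_of_le_of_lt h hz')
    exact lt_of_lt_of_le hw (F_mono P (le_of_lt hwz))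
  have hT : Tendsto (fun n : ℕ => P {ω | X ω ≤ z + 1 / ((n : ℝ) + 1)}) atTop
      (𝓝 (P (⋂ n : ℕ, {ω | X ω ≤ z + 1 / ((n : ℝ) + 1)}))) := by
    refine tendsto_measure_iInter_atTop
      (fun n => (measurableSet_le hX measurable_const).nullMeasurableSet) ?_
      ⟨0, measure_ne_top _ _⟩
    intro n m hnm ω (hω : X ω ≤ z + 1 / ((m : ℝ) + 1))
    refine le_trans hω ((add_le_add_iff_left z).mpr ?_)
    apply one_div_le_one_div_of_le (by positivity)
    exact (add_le_add_iff_right 1).mpr (by exact_mod_cast hnm)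
  have hint : (⋂ n : ℕ, {ω | X ω ≤ z + 1 / ((n : ℝ) + 1)}) = {ω | X ω ≤ z} := by
    ext ω
    simp only [Set.mem_iInter, Set.mem_setOf_eq]
    constructor
    · intro hω
      by_contra hc
      push_neg at hc
      obtain ⟨n, hn⟩ := exists_nat_one_div_lt (sub_pos.mpr hc)
      have h2 := hω n
      linarith
    · intro hω n
      have : (0:ℝ) < 1 / ((n:ℝ) + 1) := by positivity
      linarith
  rw [hint] at hT
  have hTR : Tendsto (fun n : ℕ => (P {ω | X ω ≤ z + 1 / ((n : ℝ) + 1)}).toReal) atTop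
      (𝓝 ((P {ω | X ω ≤ z}).toReal)) :=
    (ENNReal.tendsto_toReal (measure_ne_top _ _)).comp hT
  refine ge_of_tendsto hTR (Eventually.of_forall fun n => ?_)
  refine le_of_lt (step _ ?_)
  have : (0:ℝ) < 1 / ((n:ℝ) + 1) := by positivity
  linarith

end quantile

section qhat
variable {Ω : Type*} [MeasurableSpace Ω] (P : Measure Ω) [IsProbabilityMeasure P]
variable {X : Ω → ℝ}

lemma quantile_mono_on (hX : Measurable X) {p p' : ℝ} (hp : 0 < p) (hp1 : p' < 1)
    (hpp : p ≤ p') : quantile P X p ≤ quantile P X p' :=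
  csInf_le_csInf (quantile_set_bddBelow P hX hp) (quantile_set_nonempty P hp1)
    (fun _ hz => lt_of_le_of_lt hpp hz)

lemma quantile_T (hX : Measurable X) (z : ℝ) :
    MeasurableSet ({p : ℝ | quantile P X p ≤ z} ∩ Set.Ioo 0 1) ∧
      volume ({p : ℝ | quantile P X p ≤ z} ∩ Set.Ioo 0 1) = P {ω | X ω ≤ z} := by
  set Fz := (P {ω | X ω ≤ z}).toReal with hFz
  have hFz1 : Fz ≤ 1 := F_le_one P z
  have hFz0 : 0 ≤ Fz := ENNReal.toReal_nonneg
  set T := {p : ℝ | quantile P X p ≤ z} ∩ Set.Ioo 0 1 with hT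
  have hsub1 : Set.Ioo (0:ℝ) Fz ⊆ T := by
    rintro p ⟨hp0, hpF⟩
    exact ⟨quantile_le_of_lt P hX hp0 hpF, hp0, lt_of_lt_of_le hpF hFz1⟩
  have hsub2 : T ⊆ Set.Ioo (0:ℝ) Fz ∪ {Fz} := by
    rintro p ⟨hq, hp0, hp1⟩
    rcases lt_or_eq_of_le (le_of_quantile_le P hX hp0 hp1 hq) with h | h
    · exact Or.inl ⟨hp0, h⟩
    · exact Or.inr h
  have hTeq : T = Set.Ioo (0:ℝ) Fz ∪ (T ∩ {Fz}) := by
    apply Set.Subset.antisymm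
    · intro p hp
      rcases hsub2 hp with h | h
      · exact Or.inl h
      · exact Or.inr ⟨hp, h⟩
    · exact Set.union_subset hsub1 Set.inter_subset_left
  have hmeasE : MeasurableSet (T ∩ {Fz}) := by
    rcases Set.subset_singleton_iff_eq.mp (Set.inter_subset_right (s := T) (t := {Fz})) with h | h
    · rw [h]; exact MeasurableSet.empty
    · rw [h]; exact measurableSet_singleton _
  have h0 : volume (T ∩ {Fz}) = 0 :=
    measure_mono_null Set.inter_subset_right Real.volume_singleton
  constructor
  · rw [hTeq]; exact measurableSet_Ioo.union hmeasE
  · have hle : volume T ≤ ENNReal.ofReal Fz := by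
      rw [hTeq]
      refine (measure_union_le _ _).trans ?_
      rw [h0, add_zero, Real.volume_Ioo, sub_zero]
    have hge : ENNReal.ofReal Fz ≤ volume T := by
      have := measure_mono hsub1 (μ := volume)
      rwa [Real.volume_Ioo, sub_zero] at this
    rw [le_antisymm hle hge, hFz, ENNReal.ofReal_toReal (measure_ne_top _ _)]

noncomputable def qhat {Ω : Type*} [MeasurableSpace Ω] (P : Measure Ω) (X : Ω → ℝ) : ℝ → ℝ :=
  fun p => if p ∈ Set.Ioo (0:ℝ) 1 then quantile P X p else 0

lemma qhat_measurable (hX : Measurable X) : Measurable (qhat P X) := by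
  apply measurable_of_Iic
  intro z
  have : qhat P X ⁻¹' Set.Iic z
      = ({p : ℝ | quantile P X p ≤ z} ∩ Set.Ioo 0 1)
        ∪ ((Set.Ioo (0:ℝ) 1)ᶜ ∩ {p : ℝ | (0:ℝ) ≤ z}) := by
    ext p
    by_cases hp : p ∈ Set.Ioo (0:ℝ) 1 <;>
      simp [qhat, hp, Set.mem_preimage, Set.mem_Iic]
  rw [this]
  refine ((quantile_T P hX z).1).union (measurableSet_Ioo.compl.inter ?_)
  by_cases h : (0:ℝ) ≤ z
  · simp [h]
  · simp [h]

lemma qhat_law_le (hX : Measurable X) (z : ℝ) :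
    (volume.restrict (Set.Ioo (0:ℝ) 1)) {p | qhat P X p ≤ z} = P {ω | X ω ≤ z} := by
  rw [Measure.restrict_apply' measurableSet_Ioo]
  have : {p | qhat P X p ≤ z} ∩ Set.Ioo 0 1
      = {p : ℝ | quantile P X p ≤ z} ∩ Set.Ioo 0 1 := by
    ext p
    by_cases hp : p ∈ Set.Ioo (0:ℝ) 1
    · simp [qhat, hp, Set.mem_Ioo.mp hp]
    · simp [hp]
  rw [this, (quantile_T P hX z).2]

instance : IsProbabilityMeasure (volume.restrict (Set.Ioo (0:ℝ) 1)) := by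
  constructor
  rw [Measure.restrict_apply_univ, Real.volume_Ioo]
  simp

lemma qhat_law_lt (hX : Measurable X) (s : ℝ) :
    (volume.restrict (Set.Ioo (0:ℝ) 1)) {p | s < qhat P X p} = P {ω | s < X ω} := by
  have h1 : {p | s < qhat P X p} = {p | qhat P X p ≤ s}ᶜ := by
    ext p; simp [not_le]
  have h2 : {ω | s < X ω} = {ω | X ω ≤ s}ᶜ := by
    ext ω; simp [not_le]
  have hm1 : MeasurableSet {p : ℝ | qhat P X p ≤ s} := by
    exact (qhat_measurable P hX) measurableSet_Iic
  rw [h1, h2, measure_compl hm1 (measure_ne_top _ _),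
    measure_compl (measurableSet_le hX measurable_const) (measure_ne_top _ _),
    measure_univ, measure_univ, qhat_law_le P hX s]

end qhat

/-- Hardy–Littlewood upper bound: `sup_{Y ~ μ} E[XY] = ∫_0^1 Q_X(p) Q_μ(p) dp`, the
supremum being attained by any `Y ~ μ` comonotonic with `X`. -/
theorem hardy_littlewood_upper {Ω : Type*} [MeasurableSpace Ω] (P : Measure Ω)
    [IsProbabilityMeasure P] (X : Ω → ℝ) (hX : Measurable X)
    (μ : Measure ℝ) [IsProbabilityMeasure μ]
    (hI : IntegrableOn (fun p => quantile P X p * quantileM μ p) (Set.Ioo 0 1) volume) :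
    (∀ Y : Ω → ℝ, Measurable Y → P.map Y = μ →
        Integrable (fun ω => X ω * Y ω) P →
        ∫ ω, X ω * Y ω ∂P ≤ ∫ p in Set.Ioo (0:ℝ) 1, quantile P X p * quantileM μ p) ∧
    (∀ Y : Ω → ℝ, Measurable Y → P.map Y = μ → Comonotone P X Y →
        Integrable (fun ω => X ω * Y ω) P →
        ∫ ω, X ω * Y ω ∂P = ∫ p in Set.Ioo (0:ℝ) 1, quantile P X p * quantileM μ p) := by
  set ν := volume.restrict (Set.Ioo (0:ℝ) 1) with hν
  have hQXm : Measurable (qhat P X) := qhat_measurable P hX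
  have hQμm : Measurable (qhat μ id) := qhat_measurable μ measurable_id
  have hae : ∀ᵐ p ∂ν, p ∈ Set.Ioo (0:ℝ) 1 := ae_restrict_mem measurableSet_Ioo
  have hprod_int : Integrable (fun p => qhat P X p * qhat μ id p) ν := by
    refine hI.congr ?_
    filter_upwards [hae] with p hp
    simp [qhat, hp, quantileM]
  have hIeq : ∫ p in Set.Ioo (0:ℝ) 1, quantile P X p * quantileM μ p
      = ∫ p, qhat P X p * qhat μ id p ∂ν := by
    apply integral_congr_ae
    filter_upwards [hae] with p hp
    simp [qhat, hp, quantileM]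
  have hco' : Comonotone ν (qhat P X) (qhat μ id) := by
    filter_upwards [hae] with p hp
    filter_upwards [hae] with p' hp'
    simp only [qhat, if_pos hp, if_pos hp']
    rcases le_total p p' with hpp | hpp
    · have a1 : quantile P X p ≤ quantile P X p' :=
        quantile_mono_on P hX hp.1 hp'.2 hpp
      have a2 : quantile μ id p ≤ quantile μ id p' :=
        quantile_mono_on μ measurable_id hp.1 hp'.2 hpp
      have h := mul_nonneg (sub_nonneg.mpr a1) (sub_nonneg.mpr a2)
      nlinarith [h]
    · have a1 : quantile P X p' ≤ quantile P X p :=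
        quantile_mono_on P hX hp'.1 hp.2 hpp
      have a2 : quantile μ id p' ≤ quantile μ id p :=
        quantile_mono_on μ measurable_id hp'.1 hp.2 hpp
      exact mul_nonneg (by linarith) (by linarith)
  have hmX : ∀ s, P {ω | s < X ω} = ν {p | s < qhat P X p} :=
    fun s => (qhat_law_lt P hX s).symm
  have hmY : ∀ (Y : Ω → ℝ), Measurable Y → P.map Y = μ →
      ∀ t, P {ω | t < Y ω} = ν {p | t < qhat μ id p} := by
    intro Y hY hmap t
    have h1 : P {ω | t < Y ω} = μ {x | t < x} := by
      rw [← hmap, Measure.map_apply hY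
        (by exact measurableSet_lt measurable_const measurable_id :
          MeasurableSet {x : ℝ | t < x})]
      rfl
    have h2 := qhat_law_lt μ measurable_id t
    rw [h1]
    exact h2.symm
  constructor
  · intro Y hY hmap hint
    obtain ⟨hle, _⟩ := master P ν hX hY hQXm hQμm hmX (hmY Y hY hmap) hco' hint hprod_int
    rw [hIeq]
    exact hle
  · intro Y hY hmap hco hint
    obtain ⟨_, heq⟩ := master P ν hX hY hQXm hQμm hmX (hmY Y hY hmap) hco' hint hprod_int
    rw [hIeq]
    exact heq hco
end

section
/- (Hardy–Littlewood rearrangement lower bound) Let X be a random variable and μ a probability distribution on ℝ. Then inf over all random variables Y with distribution μ of E[XY] equals ∫_0^1 Q_X(p) Q_μ(1−p) dp, provided the integrals are well-defined, and the infimum is attained by any Y ~ μ anti-comonotonic with X. -/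
open MeasureTheory Set Filter Topology

set_option linter.unusedSectionVars false
set_option linter.unusedVariables false
set_option maxHeartbeats 1000000

namespace HLaux

noncomputable def g (x s : ℝ) : ℝ := (if s < x then 1 else 0) - (if s < -x then 1 else 0)

lemma ind_eq (c : ℝ) : (fun s : ℝ => if s < c then (1:ℝ) else 0) = (Iio c).indicator (fun _ => (1:ℝ)) := by
  ext s; simp [Set.indicator_apply]

lemma ind_integrable (c : ℝ) : IntegrableOn (fun s => if s < c then (1:ℝ) else 0) (Ioi 0) volume := by
  rw [ind_eq]
  rw [IntegrableOn, integrable_indicator_iff measurableSet_Iio]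
  apply (integrableOn_const_iff (by simp)).2
  right
  rw [Measure.restrict_apply measurableSet_Iio, Iio_inter_Ioi]
  exact measure_Ioo_lt_top

lemma ind_integral (c : ℝ) : ∫ s in Ioi (0:ℝ), (if s < c then (1:ℝ) else 0) = max c 0 := by
  rw [ind_eq, integral_indicator measurableSet_Iio]
  rw [Measure.restrict_restrict measurableSet_Iio, Iio_inter_Ioi]
  simp [Real.volume_Ioo, ENNReal.toReal_ofReal', max_comm]

lemma g_integrable (x : ℝ) : IntegrableOn (fun s => g x s) (Ioi 0) volume :=
  (ind_integrable x).sub (ind_integrable (-x))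

lemma g_integral (x : ℝ) : ∫ s in Ioi (0:ℝ), g x s = x := by
  unfold g
  rw [integral_sub (ind_integrable x) (ind_integrable (-x)), ind_integral, ind_integral]
  exact max_zero_sub_eq_self x

lemma abs_g {s : ℝ} (hs : 0 < s) (x : ℝ) : |g x s| = if s < |x| then 1 else 0 := by
  unfold g
  rcases lt_or_ge s x with h1 | h1
  · rw [if_pos h1, if_neg (by linarith), if_pos (by rw [abs_of_pos (hs.trans h1)]; exact h1)]
    norm_num
  · rcases lt_or_ge s (-x) with h2 | h2
    · rw [if_neg (not_lt.2 h1), if_pos h2, if_pos (lt_of_lt_of_le h2 (neg_le_abs x))]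
      norm_num
    · rw [if_neg (not_lt.2 h1), if_neg (not_lt.2 h2), if_neg]
      · norm_num
      · rw [not_lt, abs_le]; constructor <;> linarith

lemma abs_g_integral (x : ℝ) : ∫ s in Ioi (0:ℝ), |g x s| = |x| := by
  rw [setIntegral_congr_fun measurableSet_Ioi (fun s hs => abs_g hs x), ind_integral]
  exact max_eq_left (abs_nonneg x)

lemma abs_g_integrable (x : ℝ) : IntegrableOn (fun s => |g x s|) (Ioi 0) volume :=
  (g_integrable x).abs

section
noncomputable def νp : Measure (ℝ × ℝ) := (volume.restrict (Ioi 0)).prod (volume.restrict (Ioi 0))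

instance : SFinite (volume.restrict (Ioi (0:ℝ))) := by infer_instance
instance : SFinite νp := by unfold νp; infer_instance

variable {Ω : Type*} [MeasurableSpace Ω] (P : Measure Ω) [IsProbabilityMeasure P]

noncomputable def H (X Y : Ω → ℝ) (z : ℝ × ℝ) : ℝ := ∫ ω, g (X ω) z.1 * g (Y ω) z.2 ∂P

variable {X Y : Ω → ℝ}

lemma meas_if {α : Type*} [MeasurableSpace α] {f f' : α → ℝ} (hf : Measurable f)
    (hf' : Measurable f') : Measurable (fun a => if f a < f' a then (1:ℝ) else 0) := by
  have : (fun a => if f a < f' a then (1:ℝ) else 0) = {a | f a < f' a}.indicator (fun _ => 1) := by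
    ext a; simp [Set.indicator_apply]
  rw [this]
  exact measurable_const.indicator (measurableSet_lt hf hf')

lemma meas_g1 (hX : Measurable X) :
    Measurable (fun q : (ℝ × ℝ) × Ω => g (X q.2) q.1.1) := by
  unfold g
  exact (meas_if (measurable_fst.comp measurable_fst) (hX.comp measurable_snd)).sub
    (meas_if (measurable_fst.comp measurable_fst) (hX.comp measurable_snd).neg)

lemma meas_g2 (hY : Measurable Y) :
    Measurable (fun q : (ℝ × ℝ) × Ω => g (Y q.2) q.1.2) := by
  unfold g
  exact (meas_if (measurable_snd.comp measurable_fst) (hY.comp measurable_snd)).sub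
    (meas_if (measurable_snd.comp measurable_fst) (hY.comp measurable_snd).neg)

lemma F_integrable (hX : Measurable X) (hY : Measurable Y)
    (hInt : Integrable (fun ω => X ω * Y ω) P) :
    Integrable (fun q : (ℝ × ℝ) × Ω => g (X q.2) q.1.1 * g (Y q.2) q.1.2) (νp.prod P) := by
  have hm : AEStronglyMeasurable (fun q : (ℝ × ℝ) × Ω => g (X q.2) q.1.1 * g (Y q.2) q.1.2)
      (νp.prod P) := ((meas_g1 hX).mul (meas_g2 hY)).aestronglyMeasurable
  rw [integrable_prod_iff' hm]
  constructor
  · refine Eventually.of_forall (fun ω => ?_)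
    exact Integrable.mul_prod (g_integrable (X ω)) (g_integrable (Y ω))
  · have heq : ∀ ω, (∫ z : ℝ × ℝ, ‖g (X ω) z.1 * g (Y ω) z.2‖ ∂νp) = |X ω| * |Y ω| := by
      intro ω
      have : (fun z : ℝ × ℝ => ‖g (X ω) z.1 * g (Y ω) z.2‖)
          = fun z : ℝ × ℝ => |g (X ω) z.1| * |g (Y ω) z.2| := by
        ext z; rw [Real.norm_eq_abs, abs_mul]
      rw [this]
      have h2 := integral_prod_mul (μ := volume.restrict (Ioi (0:ℝ)))
        (ν := volume.restrict (Ioi (0:ℝ))) (fun s => |g (X ω) s|) (fun t => |g (Y ω) t|)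
      unfold νp
      rw [h2, abs_g_integral, abs_g_integral]
    simp_rw [heq]
    have : (fun ω => |X ω| * |Y ω|) = fun ω => |X ω * Y ω| := by
      ext ω; rw [abs_mul]
    rw [this]
    exact hInt.abs

lemma hoeffding (hX : Measurable X) (hY : Measurable Y)
    (hInt : Integrable (fun ω => X ω * Y ω) P) :
    ∫ ω, X ω * Y ω ∂P = ∫ z, H P X Y z ∂νp := by
  have hF := F_integrable P hX hY hInt
  have swap := integral_integral_swap (f := fun (z : ℝ × ℝ) (ω : Ω) => g (X ω) z.1 * g (Y ω) z.2)
    hF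
  have inner : ∀ ω, (∫ z : ℝ × ℝ, g (X ω) z.1 * g (Y ω) z.2 ∂νp) = X ω * Y ω := by
    intro ω
    have h2 := integral_prod_mul (μ := volume.restrict (Ioi (0:ℝ)))
      (ν := volume.restrict (Ioi (0:ℝ))) (fun s => g (X ω) s) (fun t => g (Y ω) t)
    unfold νp
    rw [h2, g_integral, g_integral]
  calc ∫ ω, X ω * Y ω ∂P
      = ∫ ω, ∫ z : ℝ × ℝ, g (X ω) z.1 * g (Y ω) z.2 ∂νp ∂P :=
        integral_congr_ae (Eventually.of_forall fun ω => (inner ω).symm)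
    _ = ∫ z, ∫ ω, g (X ω) z.1 * g (Y ω) z.2 ∂P ∂νp := swap.symm
    _ = ∫ z, H P X Y z ∂νp := rfl

end

section
variable {Ω : Type*} [MeasurableSpace Ω] (P : Measure Ω) [IsProbabilityMeasure P]

noncomputable def pr (S : Set Ω) : ℝ := (P S).toReal

noncomputable def L (a b a' b' : ℝ) : ℝ :=
  max (a + b - 1) 0 - min a b' - min a' b + max (a' + b' - 1) 0

variable {X Y : Ω → ℝ}

lemma pr_nonneg (S : Set Ω) : 0 ≤ pr P S := ENNReal.toReal_nonneg

lemma pr_mono {S T : Set Ω} (h : S ⊆ T) : pr P S ≤ pr P T :=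
  ENNReal.toReal_mono (measure_ne_top P T) (measure_mono h)

lemma pr_le_one (S : Set Ω) : pr P S ≤ 1 := by
  have := pr_mono P (subset_univ S)
  simpa [pr] using this

lemma pr_eq_zero {S : Set Ω} (h : P S = 0) : pr P S = 0 := by simp [pr, h]

lemma pr_union_inter {A B : Set Ω} (hB : MeasurableSet B) :
    pr P (A ∪ B) + pr P (A ∩ B) = pr P A + pr P B := by
  unfold pr
  rw [← ENNReal.toReal_add (measure_ne_top _ _) (measure_ne_top _ _),
    ← ENNReal.toReal_add (measure_ne_top _ _) (measure_ne_top _ _),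
    measure_union_add_inter A hB]

lemma pr_split {B : Set Ω} (hB : MeasurableSet B) (S : Set Ω) :
    pr P (S ∩ B) + pr P (S ∩ Bᶜ) = pr P S := by
  unfold pr
  rw [← ENNReal.toReal_add (measure_ne_top _ _) (measure_ne_top _ _)]
  congr 1
  rw [← diff_eq]
  exact measure_inter_add_diff S hB

lemma pr_compl {A : Set Ω} (hA : MeasurableSet A) : pr P Aᶜ = 1 - pr P A := by
  have h := pr_split P hA univ
  simp only [univ_inter] at h
  have : pr P univ = 1 := by simp [pr]
  linarith

lemma frechet_low {A B : Set Ω} (hA : MeasurableSet A) (hB : MeasurableSet B) :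
    max (pr P A + pr P B - 1) 0 ≤ pr P (A ∩ B) := by
  apply max_le _ (pr_nonneg P _)
  have h1 := pr_union_inter P (A := A) hB
  have h2 := pr_le_one P (A ∪ B)
  linarith

lemma frechet_up (A B : Set Ω) : pr P (A ∩ B) ≤ min (pr P A) (pr P B) :=
  le_min (pr_mono P inter_subset_left) (pr_mono P inter_subset_right)

lemma anti_null (hcom : Comonotone P X (fun ω => -Y ω)) {C D : Set Ω}
    (h : ∀ ω ∈ C, ∀ ω' ∈ D, X ω' < X ω ∧ Y ω' < Y ω) : P C = 0 ∨ P D = 0 := by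
  by_contra hc
  push_neg at hc
  obtain ⟨hC, hD⟩ := hc
  set E : Set Ω := {ω | ∀ᵐ ω' ∂P, 0 ≤ (X ω - X ω') * (-Y ω - -Y ω')} with hE
  have hEc : P Eᶜ = 0 := by
    have := hcom
    unfold Comonotone at this
    simpa [ae_iff, hE, compl_setOf] using this
  have hCE : P (C ∩ E) ≠ 0 := by
    intro h0
    apply hC
    have hsub : C ⊆ (C ∩ E) ∪ (C \ E) := by
      intro x hx
      by_cases hxE : x ∈ E
      · exact Or.inl ⟨hx, hxE⟩
      · exact Or.inr ⟨hx, hxE⟩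
    have : P C ≤ P (C ∩ E) + P (C \ E) := (measure_mono hsub).trans (measure_union_le _ _)
    have hdiff : P (C \ E) = 0 := measure_mono_null (diff_subset_compl C E) hEc
    simpa [h0, hdiff] using le_antisymm (by simpa [h0, hdiff] using this) zero_le
  obtain ⟨ω0, hω0C, hω0E⟩ := nonempty_of_measure_ne_zero hCE
  apply hD
  apply measure_mono_null (t := {ω' | ¬ 0 ≤ (X ω0 - X ω') * (-Y ω0 - -Y ω')})
  · intro ω' hω'
    obtain ⟨hx, hy⟩ := h ω0 hω0C ω' hω'
    simp only [mem_setOf_eq, not_le]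
    nlinarith [mul_pos (sub_pos.2 hx) (sub_pos.2 hy)]
  · exact ae_iff.mp hω0E

variable {P}

lemma core (hcom : Comonotone P X (fun ω => -Y ω)) {A B : Set Ω}
    (hXsep : ∀ ω ω', ω ∈ A → ω' ∉ A → X ω' < X ω)
    (hYsep : ∀ ω ω', ω ∈ B → ω' ∉ B → Y ω' < Y ω) :
    P (A ∩ B) = 0 ∨ P (Aᶜ ∩ Bᶜ) = 0 := by
  apply anti_null P hcom
  intro ω hω ω' hω'
  exact ⟨hXsep ω ω' hω.1 hω'.1, hYsep ω ω' hω.2 hω'.2⟩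

lemma eq_max (hcom : Comonotone P X (fun ω => -Y ω)) {A B : Set Ω}
    (hA : MeasurableSet A) (hB : MeasurableSet B)
    (hXsep : ∀ ω ω', ω ∈ A → ω' ∉ A → X ω' < X ω)
    (hYsep : ∀ ω ω', ω ∈ B → ω' ∉ B → Y ω' < Y ω) :
    pr P (A ∩ B) = max (pr P A + pr P B - 1) 0 := by
  have h1 := pr_union_inter P (A := A) hB
  have h2 := pr_le_one P (A ∪ B)
  rcases core hcom hXsep hYsep with h | h
  · rw [pr_eq_zero P h] at h1 ⊢
    rw [max_eq_right (by linarith)]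
  · have hc : pr P ((A ∪ B)ᶜ) = 0 := by rw [compl_union]; exact pr_eq_zero P h
    rw [pr_compl P (hA.union hB)] at hc
    have h3 := pr_nonneg P (A ∩ B)
    rw [max_eq_left (by linarith)]
    linarith

lemma eq_max' (hcom : Comonotone P X (fun ω => -Y ω)) {A B : Set Ω}
    (hA : MeasurableSet A) (hB : MeasurableSet B)
    (hXsep : ∀ ω ω', ω ∈ A → ω' ∉ A → X ω' < X ω)
    (hYsep : ∀ ω ω', ω ∈ B → ω' ∉ B → Y ω' < Y ω) :
    pr P (Aᶜ ∩ Bᶜ) = max (pr P Aᶜ + pr P Bᶜ - 1) 0 := by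
  have h1 := pr_union_inter P (A := A) hB
  have h2 := pr_le_one P (A ∪ B)
  have hca := pr_compl P hA
  have hcb := pr_compl P hB
  have hcu : pr P (Aᶜ ∩ Bᶜ) = 1 - pr P (A ∪ B) := by
    rw [← compl_union]; exact pr_compl P (hA.union hB)
  rcases core hcom hXsep hYsep with h | h
  · rw [pr_eq_zero P h] at h1
    rw [max_eq_left (by linarith)]
    linarith
  · have hz := pr_eq_zero P h
    rw [hz]
    have h3 := pr_nonneg P (A ∩ B)
    rw [max_eq_right (by linarith)]

lemma eq_min (hcom : Comonotone P X (fun ω => -Y ω)) {A B : Set Ω}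
    (hA : MeasurableSet A) (hB : MeasurableSet B)
    (hXsep : ∀ ω ω', ω ∈ A → ω' ∉ A → X ω' < X ω)
    (hYsep : ∀ ω ω', ω ∈ B → ω' ∉ B → Y ω' < Y ω) :
    pr P (A ∩ Bᶜ) = min (pr P A) (pr P Bᶜ) := by
  have h1 := pr_split (P := P) hB A
  have h2 : pr P (Bᶜ ∩ A) + pr P (Bᶜ ∩ Aᶜ) = pr P Bᶜ := pr_split (P := P) hA Bᶜ
  rw [inter_comm Bᶜ A, inter_comm Bᶜ Aᶜ] at h2
  rcases core hcom hXsep hYsep with h | h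
  · rw [pr_eq_zero P h] at h1
    have h4 := pr_nonneg P (Aᶜ ∩ Bᶜ)
    rw [min_eq_left (by linarith)]
    linarith
  · rw [pr_eq_zero P h] at h2
    have h4 := pr_nonneg P (A ∩ B)
    rw [min_eq_right (by linarith)]
    linarith

lemma eq_min' (hcom : Comonotone P X (fun ω => -Y ω)) {A B : Set Ω}
    (hA : MeasurableSet A) (hB : MeasurableSet B)
    (hXsep : ∀ ω ω', ω ∈ A → ω' ∉ A → X ω' < X ω)
    (hYsep : ∀ ω ω', ω ∈ B → ω' ∉ B → Y ω' < Y ω) :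
    pr P (Aᶜ ∩ B) = min (pr P Aᶜ) (pr P B) := by
  have h1 : pr P (B ∩ A) + pr P (B ∩ Aᶜ) = pr P B := pr_split (P := P) hA B
  rw [inter_comm B A, inter_comm B Aᶜ] at h1
  have h2 : pr P (Aᶜ ∩ B) + pr P (Aᶜ ∩ Bᶜ) = pr P Aᶜ := pr_split (P := P) hB Aᶜ
  rcases core hcom hXsep hYsep with h | h
  · rw [pr_eq_zero P h] at h1
    have h4 := pr_nonneg P (Aᶜ ∩ Bᶜ)
    rw [min_eq_right (by linarith)]
    linarith
  · rw [pr_eq_zero P h] at h2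
    have h4 := pr_nonneg P (A ∩ B)
    rw [min_eq_left (by linarith)]
    linarith

end

section
variable {Ω : Type*} [MeasurableSpace Ω] (P : Measure Ω) [IsProbabilityMeasure P]
variable {X Y : Ω → ℝ}

lemma ind_int {S : Set Ω} (hS : MeasurableSet S) :
    Integrable (S.indicator (fun _ => (1:ℝ))) P := (integrable_const (1:ℝ)).indicator hS

lemma ind_val {S : Set Ω} (hS : MeasurableSet S) :
    ∫ ω, S.indicator (fun _ => (1:ℝ)) ω ∂P = pr P S := by
  rw [integral_indicator_const (1:ℝ) hS, smul_eq_mul, mul_one]; rfl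

lemma H_eq (hX : Measurable X) (hY : Measurable Y) (z : ℝ × ℝ) :
    H P X Y z = pr P ({ω | z.1 < X ω} ∩ {ω | z.2 < Y ω})
      - pr P ({ω | z.1 < X ω} ∩ {ω | Y ω < -z.2})
      - pr P ({ω | X ω < -z.1} ∩ {ω | z.2 < Y ω})
      + pr P ({ω | X ω < -z.1} ∩ {ω | Y ω < -z.2}) := by
  have hA : MeasurableSet {ω | z.1 < X ω} := measurableSet_lt measurable_const hX
  have hA' : MeasurableSet {ω | X ω < -z.1} := measurableSet_lt hX measurable_const
  have hB : MeasurableSet {ω | z.2 < Y ω} := measurableSet_lt measurable_const hY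
  have hB' : MeasurableSet {ω | Y ω < -z.2} := measurableSet_lt hY measurable_const
  have hpt : ∀ ω, g (X ω) z.1 * g (Y ω) z.2 =
      ({ω | z.1 < X ω} ∩ {ω | z.2 < Y ω}).indicator (fun _ => (1:ℝ)) ω
      - ({ω | z.1 < X ω} ∩ {ω | Y ω < -z.2}).indicator (fun _ => (1:ℝ)) ω
      - ({ω | X ω < -z.1} ∩ {ω | z.2 < Y ω}).indicator (fun _ => (1:ℝ)) ω
      + ({ω | X ω < -z.1} ∩ {ω | Y ω < -z.2}).indicator (fun _ => (1:ℝ)) ω := by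
    intro ω
    have e1 : z.1 < -(X ω) ↔ X ω < -z.1 := by constructor <;> intro <;> linarith
    have e2 : z.2 < -(Y ω) ↔ Y ω < -z.2 := by constructor <;> intro <;> linarith
    simp only [Set.indicator_apply, mem_inter_iff, mem_setOf_eq, g, e1, e2]
    by_cases h1 : z.1 < X ω <;> by_cases h2 : X ω < -z.1 <;>
      by_cases h3 : z.2 < Y ω <;> by_cases h4 : Y ω < -z.2 <;>
      simp [h1, h2, h3, h4] <;> ring
  set i1 := ({ω | z.1 < X ω} ∩ {ω | z.2 < Y ω}).indicator (fun _ => (1:ℝ)) with hi1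
  set i2 := ({ω | z.1 < X ω} ∩ {ω | Y ω < -z.2}).indicator (fun _ => (1:ℝ)) with hi2
  set i3 := ({ω | X ω < -z.1} ∩ {ω | z.2 < Y ω}).indicator (fun _ => (1:ℝ)) with hi3
  set i4 := ({ω | X ω < -z.1} ∩ {ω | Y ω < -z.2}).indicator (fun _ => (1:ℝ)) with hi4
  have h1 : Integrable i1 P := ind_int P (hA.inter hB)
  have h2 : Integrable i2 P := ind_int P (hA.inter hB')
  have h3 : Integrable i3 P := ind_int P (hA'.inter hB)
  have h4 : Integrable i4 P := ind_int P (hA'.inter hB')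
  have k1 := integral_add (μ := P) (f := fun ω => i1 ω - i2 ω - i3 ω) (g := i4)
    (((h1.sub h2).sub h3)) h4
  have k2 := integral_sub (μ := P) (f := fun ω => i1 ω - i2 ω) (g := i3) (h1.sub h2) h3
  have k3 := integral_sub (μ := P) (f := i1) (g := i2) h1 h2
  unfold H
  rw [integral_congr_ae (Eventually.of_forall hpt), k1, k2, k3,
    ind_val P (hA.inter hB), ind_val P (hA.inter hB'), ind_val P (hA'.inter hB),
    ind_val P (hA'.inter hB')]

lemma H_ge_L (hX : Measurable X) (hY : Measurable Y) (z : ℝ × ℝ) :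
    L (pr P {ω | z.1 < X ω}) (pr P {ω | z.2 < Y ω})
      (pr P {ω | X ω < -z.1}) (pr P {ω | Y ω < -z.2}) ≤ H P X Y z := by
  have hA : MeasurableSet {ω | z.1 < X ω} := measurableSet_lt measurable_const hX
  have hA' : MeasurableSet {ω | X ω < -z.1} := measurableSet_lt hX measurable_const
  have hB : MeasurableSet {ω | z.2 < Y ω} := measurableSet_lt measurable_const hY
  have hB' : MeasurableSet {ω | Y ω < -z.2} := measurableSet_lt hY measurable_const
  rw [H_eq P hX hY z]
  unfold L
  have l1 := frechet_low P hA hB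
  have l4 := frechet_low P hA' hB'
  have u2 := frechet_up P {ω | z.1 < X ω} {ω | Y ω < -z.2}
  have u3 := frechet_up P {ω | X ω < -z.1} {ω | z.2 < Y ω}
  linarith

lemma H_eq_L (hX : Measurable X) (hY : Measurable Y)
    (hcom : Comonotone P X (fun ω => -Y ω)) (z : ℝ × ℝ) :
    H P X Y z = L (pr P {ω | z.1 < X ω}) (pr P {ω | z.2 < Y ω})
      (pr P {ω | X ω < -z.1}) (pr P {ω | Y ω < -z.2}) := by
  have hA : MeasurableSet {ω | z.1 < X ω} := measurableSet_lt measurable_const hX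
  have hA' : MeasurableSet {ω | X ω < -z.1} := measurableSet_lt hX measurable_const
  have hB : MeasurableSet {ω | z.2 < Y ω} := measurableSet_lt measurable_const hY
  have hB' : MeasurableSet {ω | Y ω < -z.2} := measurableSet_lt hY measurable_const
  have hXsep : ∀ ω ω', ω ∈ {ω | z.1 < X ω} → ω' ∉ {ω | z.1 < X ω} → X ω' < X ω := by
    intro ω ω' h h'; simp only [mem_setOf_eq, not_lt] at h h'; linarith
  have hYsep : ∀ ω ω', ω ∈ {ω | z.2 < Y ω} → ω' ∉ {ω | z.2 < Y ω} → Y ω' < Y ω := by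
    intro ω ω' h h'; simp only [mem_setOf_eq, not_lt] at h h'; linarith
  have hXsep' : ∀ ω ω', ω ∈ {ω | X ω < -z.1}ᶜ → ω' ∉ {ω | X ω < -z.1}ᶜ → X ω' < X ω := by
    intro ω ω' h h'
    simp only [mem_compl_iff, mem_setOf_eq, not_lt, not_le, not_not] at h h'
    linarith
  have hYsep' : ∀ ω ω', ω ∈ {ω | Y ω < -z.2}ᶜ → ω' ∉ {ω | Y ω < -z.2}ᶜ → Y ω' < Y ω := by
    intro ω ω' h h'
    simp only [mem_compl_iff, mem_setOf_eq, not_lt, not_le, not_not] at h h'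
    linarith
  rw [H_eq P hX hY z]
  unfold L
  have e1 : pr P ({ω | z.1 < X ω} ∩ {ω | z.2 < Y ω})
      = max (pr P {ω | z.1 < X ω} + pr P {ω | z.2 < Y ω} - 1) 0 :=
    eq_max hcom hA hB hXsep hYsep
  have e2 : pr P ({ω | z.1 < X ω} ∩ {ω | Y ω < -z.2})
      = min (pr P {ω | z.1 < X ω}) (pr P {ω | Y ω < -z.2}) := by
    have := eq_min hcom hA hB'.compl hXsep hYsep'
    rwa [compl_compl] at this
  have e3 : pr P ({ω | X ω < -z.1} ∩ {ω | z.2 < Y ω})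
      = min (pr P {ω | X ω < -z.1}) (pr P {ω | z.2 < Y ω}) := by
    have := eq_min' hcom hA'.compl hB hXsep' hYsep
    rwa [compl_compl] at this
  have e4 : pr P ({ω | X ω < -z.1} ∩ {ω | Y ω < -z.2})
      = max (pr P {ω | X ω < -z.1} + pr P {ω | Y ω < -z.2} - 1) 0 := by
    have := eq_max' hcom hA'.compl hB'.compl hXsep' hYsep'
    rwa [compl_compl, compl_compl] at this
  rw [e1, e2, e3, e4]

end

section
variable {Ω : Type*} [MeasurableSpace Ω] (P : Measure Ω) [IsProbabilityMeasure P]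
variable {X : Ω → ℝ}

lemma F_mono : Monotone (fun s => (P {ω | X ω ≤ s}).toReal) := by
  intro s t hst
  exact ENNReal.toReal_mono (measure_ne_top P _)
    (measure_mono (fun ω (h : X ω ≤ s) => le_trans h hst))

lemma F_le_one (s : ℝ) : (P {ω | X ω ≤ s}).toReal ≤ 1 := by
  have := ENNReal.toReal_mono (measure_ne_top P univ) (measure_mono (subset_univ {ω | X ω ≤ s}))
  simpa using this

lemma S_nonempty {p : ℝ} (hp1 : p < 1) : {z : ℝ | p < (P {ω | X ω ≤ z}).toReal}.Nonempty := by
  have hun : ⋃ n : ℕ, {ω | X ω ≤ (n:ℝ)} = univ := by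
    ext ω; simp only [mem_iUnion, mem_setOf_eq, mem_univ, iff_true]
    obtain ⟨n, hn⟩ := exists_nat_ge (X ω); exact ⟨n, hn⟩
  have hmono : Monotone (fun n : ℕ => {ω | X ω ≤ (n:ℝ)}) := by
    intro n m hnm ω (h : X ω ≤ (n:ℝ))
    exact le_trans h (by exact_mod_cast Nat.cast_le.2 hnm)
  have hT := tendsto_measure_iUnion_atTop (μ := P) hmono
  rw [hun] at hT
  have hT2 : Tendsto (fun n : ℕ => (P {ω | X ω ≤ (n:ℝ)}).toReal) atTop (𝓝 1) := by
    have := (ENNReal.tendsto_toReal (measure_ne_top P univ)).comp hT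
    simpa [Function.comp_def] using this
  obtain ⟨n, hn⟩ := (hT2.eventually (eventually_gt_nhds hp1)).exists
  exact ⟨(n:ℝ), hn⟩

lemma S_bdd (hX : Measurable X) {p : ℝ} (hp0 : 0 < p) :
    BddBelow {z : ℝ | p < (P {ω | X ω ≤ z}).toReal} := by
  have hint : ⋂ n : ℕ, {ω | X ω ≤ -(n:ℝ)} = ∅ := by
    ext ω
    simp only [mem_iInter, mem_setOf_eq, mem_empty_iff_false, iff_false, not_forall, not_le]
    obtain ⟨n, hn⟩ := exists_nat_gt (-(X ω))
    exact ⟨n, by linarith⟩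
  have hanti : Antitone (fun n : ℕ => {ω | X ω ≤ -(n:ℝ)}) := by
    intro n m hnm ω (h : X ω ≤ -(m:ℝ))
    have : (n:ℝ) ≤ (m:ℝ) := by exact_mod_cast hnm
    exact le_trans h (by linarith)
  have hT := tendsto_measure_iInter_atTop (μ := P) (s := fun n : ℕ => {ω | X ω ≤ -(n:ℝ)})
    (fun n => (show MeasurableSet {ω | X ω ≤ -(n:ℝ)} from hX measurableSet_Iic).nullMeasurableSet)
    hanti ⟨0, measure_ne_top P _⟩
  rw [hint] at hT
  have hT2 : Tendsto (fun n : ℕ => (P {ω | X ω ≤ -(n:ℝ)}).toReal) atTop (𝓝 0) := by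
    have := (ENNReal.tendsto_toReal (by simp)).comp hT
    simpa [Function.comp_def] using this
  obtain ⟨n, hn⟩ := (hT2.eventually (eventually_lt_nhds hp0)).exists
  refine ⟨-(n:ℝ), fun z hz => ?_⟩
  by_contra hc
  push_neg at hc
  have : (P {ω | X ω ≤ z}).toReal ≤ (P {ω | X ω ≤ -(n:ℝ)}).toReal := F_mono P hc.le
  exact absurd hz (by simp only [mem_setOf_eq, not_lt]; linarith)

lemma F_right_cont {p s : ℝ} (hX : Measurable X)
    (h : ∀ ε > 0, p < (P {ω | X ω ≤ s + ε}).toReal) : p ≤ (P {ω | X ω ≤ s}).toReal := by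
  have hint : ⋂ n : ℕ, {ω | X ω ≤ s + 1/((n:ℝ)+1)} = {ω | X ω ≤ s} := by
    ext ω
    simp only [mem_iInter, mem_setOf_eq]
    constructor
    · intro h'
      by_contra hc
      push_neg at hc
      obtain ⟨n, hn⟩ := exists_nat_one_div_lt (show (0:ℝ) < X ω - s by linarith)
      have := h' n
      linarith
    · intro h' n
      have : (0:ℝ) < 1/((n:ℝ)+1) := by positivity
      linarith
  have hanti : Antitone (fun n : ℕ => {ω | X ω ≤ s + 1/((n:ℝ)+1)}) := by
    intro n m hnm ω (h' : X ω ≤ s + 1/((m:ℝ)+1))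
    have h1 : ((n:ℝ)+1) ≤ ((m:ℝ)+1) := by exact_mod_cast Nat.succ_le_succ hnm
    have h2 : 1/((m:ℝ)+1) ≤ 1/((n:ℝ)+1) := by
      apply one_div_le_one_div_of_le (by positivity) h1
    exact le_trans h' (by linarith)
  have hT := tendsto_measure_iInter_atTop (μ := P)
    (s := fun n : ℕ => {ω | X ω ≤ s + 1/((n:ℝ)+1)})
    (fun n => (show MeasurableSet {ω | X ω ≤ s + 1/((n:ℝ)+1)} from
      hX measurableSet_Iic).nullMeasurableSet)
    hanti ⟨0, measure_ne_top P _⟩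
  rw [hint] at hT
  have hT2 : Tendsto (fun n : ℕ => (P {ω | X ω ≤ s + 1/((n:ℝ)+1)}).toReal) atTop
      (𝓝 (P {ω | X ω ≤ s}).toReal) := by
    exact (ENNReal.tendsto_toReal (measure_ne_top P _)).comp hT
  apply ge_of_tendsto hT2
  exact Eventually.of_forall (fun n => (h _ (by positivity)).le)

lemma F_left_lim {s : ℝ} (hX : Measurable X) :
    Tendsto (fun n : ℕ => (P {ω | X ω ≤ s - 1/((n:ℝ)+1)}).toReal) atTop
      (𝓝 (P {ω | X ω < s}).toReal) := by
  have hun : ⋃ n : ℕ, {ω | X ω ≤ s - 1/((n:ℝ)+1)} = {ω | X ω < s} := by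
    ext ω
    simp only [mem_iUnion, mem_setOf_eq]
    constructor
    · rintro ⟨n, hn⟩
      have : (0:ℝ) < 1/((n:ℝ)+1) := by positivity
      linarith
    · intro h'
      obtain ⟨n, hn⟩ := exists_nat_one_div_lt (show (0:ℝ) < s - X ω by linarith)
      exact ⟨n, by linarith⟩
  have hmono : Monotone (fun n : ℕ => {ω | X ω ≤ s - 1/((n:ℝ)+1)}) := by
    intro n m hnm ω (h' : X ω ≤ s - 1/((n:ℝ)+1))
    have h1 : ((n:ℝ)+1) ≤ ((m:ℝ)+1) := by exact_mod_cast Nat.succ_le_succ hnm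
    have h2 : 1/((m:ℝ)+1) ≤ 1/((n:ℝ)+1) := one_div_le_one_div_of_le (by positivity) h1
    exact le_trans h' (by linarith)
  have hT := tendsto_measure_iUnion_atTop (μ := P) hmono
  rw [hun] at hT
  exact (ENNReal.tendsto_toReal (measure_ne_top P _)).comp hT

lemma q_le_iff (hX : Measurable X) {p s : ℝ} (hp0 : 0 < p) (hp1 : p < 1) :
    quantile P X p ≤ s ↔ ∀ ε > 0, p < (P {ω | X ω ≤ s + ε}).toReal := by
  constructor
  · intro h ε hε
    have h2 : sInf {z : ℝ | p < (P {ω | X ω ≤ z}).toReal} < s + ε := lt_of_le_of_lt h (by linarith)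
    obtain ⟨z, hz, hzlt⟩ := (csInf_lt_iff (S_bdd P hX hp0) (S_nonempty P hp1)).1 h2
    exact lt_of_lt_of_le hz (F_mono P hzlt.le)
  · intro h
    apply le_of_forall_pos_le_add
    intro ε hε
    exact csInf_le (S_bdd P hX hp0) (h ε hε)

lemma q_lt_iff (hX : Measurable X) {p s : ℝ} (hp0 : 0 < p) (hp1 : p < 1) :
    quantile P X p < s ↔ p < (P {ω | X ω < s}).toReal := by
  constructor
  · intro h
    obtain ⟨z, hz, hzlt⟩ := (csInf_lt_iff (S_bdd P hX hp0) (S_nonempty P hp1)).1 h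
    refine lt_of_lt_of_le hz (ENNReal.toReal_mono (measure_ne_top P _) (measure_mono ?_))
    intro ω (h' : X ω ≤ z)
    exact lt_of_le_of_lt h' hzlt
  · intro h
    obtain ⟨n, hn⟩ := ((F_left_lim P hX).eventually (eventually_gt_nhds h)).exists
    have hz : quantile P X p ≤ s - 1/((n:ℝ)+1) := csInf_le (S_bdd P hX hp0) hn
    have : (0:ℝ) < 1/((n:ℝ)+1) := by positivity
    linarith

lemma q_neg {p : ℝ} (hp : p < 0) : quantile P X p = 0 := by
  unfold quantile
  have : {z : ℝ | p < (P {ω | X ω ≤ z}).toReal} = univ := by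
    ext z; simp only [mem_setOf_eq, mem_univ, iff_true]
    exact lt_of_lt_of_le hp ENNReal.toReal_nonneg
  rw [this]
  exact Real.sInf_of_not_bddBelow (not_bddBelow_univ)

lemma q_ge_one {p : ℝ} (hp : 1 ≤ p) : quantile P X p = 0 := by
  unfold quantile
  have : {z : ℝ | p < (P {ω | X ω ≤ z}).toReal} = ∅ := by
    ext z
    simp only [mem_setOf_eq, mem_empty_iff_false, iff_false, not_lt]
    exact le_trans (F_le_one P z) hp
  rw [this]
  exact Real.sInf_empty

lemma measurable_quantile (hX : Measurable X) : Measurable (fun p => quantile P X p) := by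
  apply measurable_of_Iio
  intro c
  have hset : (fun p => quantile P X p) ⁻¹' (Iio c) =
      (Ioo 0 1 ∩ Iio ((P {ω | X ω < c}).toReal))
      ∪ ((Iio 0 ∪ Ici 1) ∩ (if (0:ℝ) < c then univ else ∅))
      ∪ ({0} ∩ (if quantile P X 0 < c then univ else ∅)) := by
    ext p
    simp only [mem_preimage, mem_Iio, mem_union, mem_inter_iff, mem_Ioo, mem_Ici,
      mem_singleton_iff]
    rcases lt_trichotomy p 0 with hp | hp | hp
    · rw [q_neg P hp]
      constructor
      · intro hc
        rw [if_pos hc]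
        exact Or.inl (Or.inr ⟨Or.inl hp, mem_univ _⟩)
      · rintro ((⟨⟨h1, _⟩, _⟩ | ⟨_, h2⟩) | ⟨h1, _⟩)
        · linarith
        · by_cases h : (0:ℝ) < c
          · exact h
          · rw [if_neg h] at h2; exact absurd h2 (notMem_empty p)
        · rw [h1] at hp; linarith
    · subst hp
      constructor
      · intro hc
        rw [if_pos hc]
        exact Or.inr ⟨rfl, mem_univ _⟩
      · rintro ((⟨⟨h1, _⟩, _⟩ | ⟨h1, h2⟩) | ⟨_, h2⟩)
        · linarith
        · rcases h1 with h1 | h1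
          · linarith
          · linarith
        · by_cases h : quantile P X 0 < c
          · exact h
          · rw [if_neg h] at h2; exact absurd h2 (notMem_empty 0)
    · rcases lt_or_ge p 1 with hp1 | hp1
      · rw [show (quantile P X p < c) = (p < (P {ω | X ω < c}).toReal) from
          propext (q_lt_iff P hX hp hp1)]
        constructor
        · intro hc
          exact Or.inl (Or.inl ⟨⟨hp, hp1⟩, hc⟩)
        · rintro ((⟨_, h2⟩ | ⟨h1, h2⟩) | ⟨h1, _⟩)
          · exact h2
          · rcases h1 with h1 | h1
            · linarith
            · linarith
          · rw [h1] at hp; linarith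
      · rw [q_ge_one P hp1]
        constructor
        · intro hc
          rw [if_pos hc]
          exact Or.inl (Or.inr ⟨Or.inr hp1, mem_univ _⟩)
        · rintro ((⟨⟨_, h2⟩, _⟩ | ⟨_, h2⟩) | ⟨h1, _⟩)
          · linarith
          · by_cases h : (0:ℝ) < c
            · exact h
            · rw [if_neg h] at h2; exact absurd h2 (notMem_empty p)
          · rw [h1] at hp; linarith
  rw [hset]
  refine ((measurableSet_Ioo.inter measurableSet_Iio).union
    ((measurableSet_Iio.union measurableSet_Ici).inter ?_)).union
    ((measurableSet_singleton 0).inter ?_) <;>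
  · split
    · exact MeasurableSet.univ
    · exact MeasurableSet.empty

lemma q_monoOn (hX : Measurable X) : MonotoneOn (fun p => quantile P X p) (Ioo 0 1) := by
  intro p hp p' hp' hpp'
  apply csInf_le_csInf (S_bdd P hX hp.1) (S_nonempty P hp'.2)
  intro z hz
  exact lt_of_le_of_lt hpp' hz

noncomputable def Pu : Measure ℝ := volume.restrict (Ioo (0:ℝ) 1)

instance : IsProbabilityMeasure Pu :=
  ⟨by rw [Pu, Measure.restrict_apply_univ, Real.volume_Ioo]; norm_num⟩

lemma marg_lt (hX : Measurable X) (c : ℝ) :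
    Pu {p | quantile P X p < c} = P {ω | X ω < c} := by
  set d := (P {ω | X ω < c}).toReal with hd
  have hd0 : 0 ≤ d := ENNReal.toReal_nonneg
  have hd1 : d ≤ 1 := by
    have := ENNReal.toReal_mono (measure_ne_top P univ) (measure_mono (subset_univ {ω | X ω < c}))
    simpa using this
  rw [Pu, Measure.restrict_apply' measurableSet_Ioo]
  have hset : {p | quantile P X p < c} ∩ Ioo 0 1 = Ioo 0 d := by
    ext p
    simp only [mem_inter_iff, mem_setOf_eq, mem_Ioo]
    constructor
    · rintro ⟨h1, h2, h3⟩
      exact ⟨h2, (q_lt_iff P hX h2 h3).1 h1⟩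
    · rintro ⟨h1, h2⟩
      have h3 : p < 1 := lt_of_lt_of_le h2 hd1
      exact ⟨(q_lt_iff P hX h1 h3).2 h2, h1, h3⟩
  rw [hset, Real.volume_Ioo]
  rw [hd]
  rw [show c = c from rfl]
  simp only [sub_zero]
  exact ENNReal.ofReal_toReal (measure_ne_top P _)

lemma marg_gt (hX : Measurable X) (s : ℝ) :
    Pu {p | s < quantile P X p} = P {ω | s < X ω} := by
  set c := (P {ω | X ω ≤ s}).toReal with hc
  have hc0 : 0 ≤ c := ENNReal.toReal_nonneg
  have hc1 : c ≤ 1 := by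
    have := ENNReal.toReal_mono (measure_ne_top P univ) (measure_mono (subset_univ {ω | X ω ≤ s}))
    simpa using this
  rw [Pu, Measure.restrict_apply' measurableSet_Ioo]
  have hsub1 : Ioo c 1 ⊆ {p | s < quantile P X p} ∩ Ioo 0 1 := by
    rintro p ⟨h1, h2⟩
    have hp0 : 0 < p := lt_of_le_of_lt hc0 h1
    refine ⟨?_, hp0, h2⟩
    simp only [mem_setOf_eq]
    by_contra hle
    push_neg at hle
    have := F_right_cont P hX ((q_le_iff P hX hp0 h2).1 hle)
    rw [← hc] at this
    linarith
  have hsub2 : {p | s < quantile P X p} ∩ Ioo 0 1 ⊆ Ico c 1 := by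
    rintro p ⟨h1, h2, h3⟩
    simp only [mem_setOf_eq] at h1
    refine ⟨?_, h3⟩
    by_contra hlt
    push_neg at hlt
    have hle : quantile P X p ≤ s := by
      rw [q_le_iff P hX h2 h3]
      intro ε hε
      have : c ≤ (P {ω | X ω ≤ s + ε}).toReal := F_mono P (by linarith)
      linarith
    linarith
  have hv1 : volume (Ioo c 1) = ENNReal.ofReal (1 - c) := Real.volume_Ioo
  have hv2 : volume (Ico c 1) = ENNReal.ofReal (1 - c) := Real.volume_Ico
  have hmeq : volume ({p | s < quantile P X p} ∩ Ioo 0 1) = ENNReal.ofReal (1 - c) := by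
    apply le_antisymm
    · rw [← hv2]; exact measure_mono hsub2
    · rw [← hv1]; exact measure_mono hsub1
  rw [hmeq]
  have hcompl : {ω | s < X ω} = {ω | X ω ≤ s}ᶜ := by
    ext ω; simp [not_le]
  rw [hcompl, prob_compl_eq_one_sub (s := {ω | X ω ≤ s})
    (show MeasurableSet {ω | X ω ≤ s} from hX measurableSet_Iic)]
  rw [show P {ω | X ω ≤ s} = ENNReal.ofReal c from (ENNReal.ofReal_toReal (measure_ne_top P _)).symm]
  rw [← ENNReal.ofReal_one, ← ENNReal.ofReal_sub 1 hc0]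

lemma refl_pres : MeasurePreserving (fun p : ℝ => 1 - p) Pu Pu := by
  have h1 : MeasurePreserving (fun p : ℝ => 1 - p) volume volume := by
    have hneg := Measure.measurePreserving_neg (volume : Measure ℝ)
    have hadd := measurePreserving_add_left (volume : Measure ℝ) (1:ℝ)
    have hcomp := hadd.comp hneg
    have : ((fun x : ℝ => 1 + x) ∘ Neg.neg) = fun p : ℝ => 1 - p := by
      ext p; simp [sub_eq_add_neg]
    rwa [this] at hcomp
  have hpre : (fun p : ℝ => 1 - p) ⁻¹' (Ioo 0 1) = Ioo 0 1 := by
    ext p; simp only [mem_preimage, mem_Ioo]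
    constructor <;> rintro ⟨a, b⟩ <;> constructor <;> linarith
  have h2 := h1.restrict_preimage (s := Ioo 0 1) measurableSet_Ioo
  rw [hpre] at h2
  exact h2

variable (μ : Measure ℝ) [IsProbabilityMeasure μ]

lemma margV_gt (t : ℝ) : Pu {p | t < quantileM μ (1 - p)} = μ {y | t < y} := by
  have hQ : Measurable (fun q => quantile μ id q) := measurable_quantile μ measurable_id
  have hs : {p | t < quantileM μ (1 - p)} = (fun p : ℝ => 1 - p) ⁻¹' {q | t < quantileM μ q} :=
    rfl
  have hms : MeasurableSet {q | t < quantileM μ q} := measurableSet_lt measurable_const hQ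
  rw [hs, refl_pres.measure_preimage hms.nullMeasurableSet]
  exact marg_gt μ measurable_id t

lemma margV_lt (c : ℝ) : Pu {p | quantileM μ (1 - p) < c} = μ {y | y < c} := by
  have hQ : Measurable (fun q => quantile μ id q) := measurable_quantile μ measurable_id
  have hs : {p | quantileM μ (1 - p) < c} = (fun p : ℝ => 1 - p) ⁻¹' {q | quantileM μ q < c} :=
    rfl
  have hms : MeasurableSet {q | quantileM μ q < c} := measurableSet_lt hQ measurable_const
  rw [hs, refl_pres.measure_preimage hms.nullMeasurableSet]
  exact marg_lt μ measurable_id c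

lemma comUV (hX : Measurable X) :
    Comonotone Pu (fun p => quantile P X p) (fun p => -(quantileM μ (1 - p))) := by
  unfold Comonotone Pu
  apply ae_restrict_of_forall_mem measurableSet_Ioo
  intro p hp
  apply ae_restrict_of_forall_mem measurableSet_Ioo
  intro p' hp'
  have hmem : ∀ q : ℝ, q ∈ Ioo (0:ℝ) 1 → (1 - q) ∈ Ioo (0:ℝ) 1 := by
    rintro q ⟨a, b⟩; exact ⟨by linarith, by linarith⟩
  have hU := q_monoOn P hX
  have hV := q_monoOn μ (measurable_id) (X := id)
  rcases le_total p p' with h | h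
  · have h1 : quantile P X p ≤ quantile P X p' := hU hp hp' h
    have h2 : quantile μ id (1 - p') ≤ quantile μ id (1 - p) :=
      hV (hmem p' hp') (hmem p hp) (by linarith)
    have h3 := mul_nonneg (by linarith : (0:ℝ) ≤ quantile P X p' - quantile P X p)
      (by linarith : (0:ℝ) ≤ quantile μ id (1 - p) - quantile μ id (1 - p'))
    show (0:ℝ) ≤ (quantile P X p - quantile P X p') *
      (-(quantile μ id (1 - p)) - -(quantile μ id (1 - p')))
    nlinarith [h3]
  · have h1 : quantile P X p' ≤ quantile P X p := hU hp' hp h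
    have h2 : quantile μ id (1 - p) ≤ quantile μ id (1 - p') :=
      hV (hmem p hp) (hmem p' hp') (by linarith)
    have h3 := mul_nonneg (by linarith : (0:ℝ) ≤ quantile P X p - quantile P X p')
      (by linarith : (0:ℝ) ≤ quantile μ id (1 - p') - quantile μ id (1 - p))
    show (0:ℝ) ≤ (quantile P X p - quantile P X p') *
      (-(quantile μ id (1 - p)) - -(quantile μ id (1 - p')))
    nlinarith [h3]

end

end HLaux

open HLaux in
/-- Hardy–Littlewood lower bound: `inf_{Y ~ μ} E[XY] = ∫_0^1 Q_X(p) Q_μ(1−p) dp`, the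
infimum being attained by any `Y ~ μ` anti-comonotonic with `X`. -/
theorem hardy_littlewood_lower {Ω : Type*} [MeasurableSpace Ω] (P : Measure Ω)
    [IsProbabilityMeasure P] (X : Ω → ℝ) (hX : Measurable X)
    (μ : Measure ℝ) [IsProbabilityMeasure μ]
    (hI : IntegrableOn (fun p => quantile P X p * quantileM μ (1 - p)) (Set.Ioo 0 1) volume) :
    (∀ Y : Ω → ℝ, Measurable Y → P.map Y = μ →
        Integrable (fun ω => X ω * Y ω) P →
        ∫ ω, X ω * Y ω ∂P ≥ ∫ p in Set.Ioo (0:ℝ) 1, quantile P X p * quantileM μ (1 - p)) ∧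
    (∀ Y : Ω → ℝ, Measurable Y → P.map Y = μ → Comonotone P X (fun ω => - Y ω) →
        Integrable (fun ω => X ω * Y ω) P →
        ∫ ω, X ω * Y ω ∂P = ∫ p in Set.Ioo (0:ℝ) 1, quantile P X p * quantileM μ (1 - p)) := by
  have hU : Measurable (fun p => quantile P X p) := measurable_quantile P hX
  have hV : Measurable (fun p => quantileM μ (1 - p)) := by
    have h1 : Measurable (fun q => quantile μ id q) := measurable_quantile μ measurable_id
    exact h1.comp (measurable_const.sub measurable_id)
  have hIuv : Integrable (fun p => quantile P X p * quantileM μ (1 - p)) Pu := hI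
  have hRHS : (∫ p in Set.Ioo (0:ℝ) 1, quantile P X p * quantileM μ (1 - p))
      = ∫ z, H Pu (fun p => quantile P X p) (fun p => quantileM μ (1 - p)) z ∂νp :=
    hoeffding Pu hU hV hIuv
  -- common facts for a given Y
  have main : ∀ Y : Ω → ℝ, Measurable Y → P.map Y = μ →
      Integrable (fun ω => X ω * Y ω) P →
      (∀ z : ℝ × ℝ, H Pu (fun p => quantile P X p) (fun p => quantileM μ (1 - p)) z
        = L (pr P {ω | z.1 < X ω}) (pr P {ω | z.2 < Y ω})
            (pr P {ω | X ω < -z.1}) (pr P {ω | Y ω < -z.2})) := by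
    intro Y hY hmap hInt z
    have hYgt : ∀ t : ℝ, P {ω | t < Y ω} = μ {y | t < y} := by
      intro t
      rw [← hmap, Measure.map_apply hY (s := {y : ℝ | t < y})
        (show MeasurableSet {y : ℝ | t < y} from measurableSet_lt measurable_const measurable_id)]
      rfl
    have hYlt : ∀ c : ℝ, P {ω | Y ω < c} = μ {y | y < c} := by
      intro c
      rw [← hmap, Measure.map_apply hY (s := {y : ℝ | y < c})
        (show MeasurableSet {y : ℝ | y < c} from measurableSet_lt measurable_id measurable_const)]
      rfl
    rw [H_eq_L Pu hU hV (comUV P μ hX) z]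
    unfold pr
    rw [marg_gt P hX z.1, marg_lt P hX (-z.1), margV_gt μ z.2, margV_lt μ (-z.2),
      hYgt z.2, hYlt (-z.2)]
  constructor
  · intro Y hY hmap hInt
    have hkey := main Y hY hmap hInt
    rw [ge_iff_le, hRHS, hoeffding P hX hY hInt]
    apply integral_mono
    · exact (F_integrable Pu hU hV hIuv).integral_prod_left
    · exact (F_integrable P hX hY hInt).integral_prod_left
    · intro z
      rw [hkey z]
      exact H_ge_L P hX hY z
  · intro Y hY hmap hcom hInt
    have hkey := main Y hY hmap hInt
    rw [hRHS, hoeffding P hX hY hInt]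
    apply integral_congr_ae
    apply Eventually.of_forall
    intro z
    rw [hkey z, H_eq_L P hX hY hcom z]
end

section
/- If X₁ ≥ X₂ almost surely and P(X₁ > X₂) > 0, then the quantile functions satisfy Q_{X₁}(p) ≥ Q_{X₂}(p) for all p ∈ (0,1), and there exists a nonempty open interval (a,b) ⊂ (0,1) on which Q_{X₁}(p) > Q_{X₂}(p). -/
open MeasureTheory Set Filter Topology ProbabilityTheory

section helpers

variable {μ : Measure ℝ} [IsProbabilityMeasure μ]

lemma qset_nonempty {p : ℝ} (hp : p < 1) : {z : ℝ | p < cdf μ z}.Nonempty := by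
  have h := (tendsto_cdf_atTop μ).eventually_const_lt hp
  exact h.exists

lemma qset_bddBelow {p : ℝ} (hp : 0 < p) : BddBelow {z : ℝ | p < cdf μ z} := by
  have h := (tendsto_cdf_atBot μ).eventually_lt_const hp
  obtain ⟨z₀, hz₀⟩ := h.exists
  refine ⟨z₀, fun z hz => ?_⟩
  by_contra hzz
  push_neg at hzz
  exact absurd (lt_of_le_of_lt (monotone_cdf μ hzz.le) hz₀) (not_lt.2 hz.le)

lemma lt_qset_sInf {p q : ℝ} (hp : p < 1) (hq : cdf μ q < p) :
    q < sInf {z : ℝ | p < cdf μ z} := by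
  have hrc : ContinuousWithinAt (cdf μ) (Ici q) q := (cdf μ).right_continuous q
  have h1 : ∀ᶠ x in 𝓝[≥] q, cdf μ x < p := hrc.eventually_lt_const hq
  have h2 : ∀ᶠ x in 𝓝[>] q, cdf μ x < p := nhdsWithin_mono q Ioi_subset_Ici_self h1
  have h3 : ∀ᶠ x in 𝓝[>] q, q < x := eventually_mem_nhdsWithin
  obtain ⟨x, hx1, hx2⟩ := (h2.and h3).exists
  calc q < x := hx2
    _ ≤ sInf {z : ℝ | p < cdf μ z} := by
        refine le_csInf (qset_nonempty hp) fun z hz => ?_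
        by_contra hzz
        push_neg at hzz
        exact absurd (lt_of_le_of_lt (monotone_cdf μ hzz.le) hx1) (not_lt.2 hz.le)

end helpers

/-- If `X₁ ≥ X₂` a.s. and `P(X₁ > X₂) > 0` then `Q_{X₁} ≥ Q_{X₂}` on `(0,1)`, with strict
inequality on some nonempty open subinterval `(a,b) ⊆ (0,1)`. -/
theorem quantile_mono_of_ae_le {Ω : Type*} [MeasurableSpace Ω] (P : Measure Ω)
    [IsProbabilityMeasure P] (X₁ X₂ : Ω → ℝ) (hX₁ : Measurable X₁) (hX₂ : Measurable X₂)
    (hle : ∀ᵐ ω ∂P, X₂ ω ≤ X₁ ω) (hlt : 0 < P {ω | X₂ ω < X₁ ω}) :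
    (∀ p ∈ Set.Ioo (0:ℝ) 1, quantile P X₂ p ≤ quantile P X₁ p) ∧
    (∃ a b : ℝ, a < b ∧ Set.Ioo a b ⊆ Set.Ioo (0:ℝ) 1 ∧
      ∀ p ∈ Set.Ioo a b, quantile P X₂ p < quantile P X₁ p) := by
  set μ₁ := P.map X₁ with hμ₁
  set μ₂ := P.map X₂ with hμ₂
  haveI : IsProbabilityMeasure μ₁ := Measure.isProbabilityMeasure_map hX₁.aemeasurable
  haveI : IsProbabilityMeasure μ₂ := Measure.isProbabilityMeasure_map hX₂.aemeasurable
  have hF₁ : ∀ z, (P {ω | X₁ ω ≤ z}).toReal = cdf μ₁ z := by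
    intro z
    rw [cdf_eq_real, measureReal_def, hμ₁, Measure.map_apply hX₁ measurableSet_Iic]
    rfl
  have hF₂ : ∀ z, (P {ω | X₂ ω ≤ z}).toReal = cdf μ₂ z := by
    intro z
    rw [cdf_eq_real, measureReal_def, hμ₂, Measure.map_apply hX₂ measurableSet_Iic]
    rfl
  have hq₁ : ∀ p, quantile P X₁ p = sInf {z : ℝ | p < cdf μ₁ z} := by
    intro p; unfold quantile; simp_rw [hF₁]
  have hq₂ : ∀ p, quantile P X₂ p = sInf {z : ℝ | p < cdf μ₂ z} := by
    intro p; unfold quantile; simp_rw [hF₂]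
  -- pointwise comparison of cdfs
  have hcdf_le : ∀ z, cdf μ₁ z ≤ cdf μ₂ z := by
    intro z
    rw [← hF₁, ← hF₂]
    refine ENNReal.toReal_mono (measure_ne_top _ _) (measure_mono_ae ?_)
    filter_upwards [hle] with ω hω h1
    exact le_trans hω h1
  constructor
  · intro p hp
    rw [hq₁, hq₂]
    exact csInf_le_csInf (qset_bddBelow hp.1)
      (qset_nonempty hp.2)
      (fun z hz => lt_of_lt_of_le hz (hcdf_le z))
  · -- find a rational q with positive mass of {X₂ ≤ q < X₁}
    have hcover : {ω | X₂ ω < X₁ ω} ⊆ ⋃ q : ℚ, {ω | X₂ ω ≤ (q:ℝ) ∧ (q:ℝ) < X₁ ω} := by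
      intro ω hω
      obtain ⟨q, hq1, hq2⟩ := exists_rat_btwn (K := ℝ) hω
      exact mem_iUnion.2 ⟨q, hq1.le, hq2⟩
    have : 0 < P (⋃ q : ℚ, {ω | X₂ ω ≤ (q:ℝ) ∧ (q:ℝ) < X₁ ω}) :=
      lt_of_lt_of_le hlt (measure_mono hcover)
    obtain ⟨q, hq⟩ := exists_measure_pos_of_not_measure_iUnion_null (by
      intro h; rw [h] at this; exact lt_irrefl 0 this)
    set A := {ω | X₂ ω ≤ (q:ℝ) ∧ (q:ℝ) < X₁ ω} with hA
    have hAmeas : MeasurableSet A :=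
      (hX₂ measurableSet_Iic).inter (hX₁ measurableSet_Ioi)
    -- key: cdf μ₁ q + P(A) ≤ cdf μ₂ q
    have hkey : cdf μ₁ (q:ℝ) + (P A).toReal ≤ cdf μ₂ (q:ℝ) := by
      rw [← hF₁, ← hF₂]
      have hdisj : Disjoint {ω | X₁ ω ≤ (q:ℝ)} A := by
        rw [Set.disjoint_left]
        rintro ω hω1 ⟨_, hω2⟩
        exact absurd hω2 (not_lt.2 hω1)
      have hsub : P ({ω | X₁ ω ≤ (q:ℝ)} ∪ A) ≤ P {ω | X₂ ω ≤ (q:ℝ)} := by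
        refine measure_mono_ae ?_
        filter_upwards [hle] with ω hω hmem
        rcases hmem with h | h
        · exact le_trans hω h
        · exact h.1
      rw [measure_union hdisj hAmeas] at hsub
      have := ENNReal.toReal_mono (measure_ne_top _ _) hsub
      rwa [ENNReal.toReal_add (measure_ne_top _ _) (measure_ne_top _ _)] at this
    have hPA : 0 < (P A).toReal := ENNReal.toReal_pos hq.ne' (measure_ne_top _ _)
    refine ⟨cdf μ₁ (q:ℝ), cdf μ₂ (q:ℝ), by linarith, ?_, ?_⟩
    · intro p hp
      exact ⟨lt_of_le_of_lt (cdf_nonneg (μ := μ₁) _) hp.1, lt_of_lt_of_le hp.2 (cdf_le_one (μ := μ₂) _)⟩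
    · intro p hp
      have hp0 : 0 < p := lt_of_le_of_lt (cdf_nonneg (μ := μ₁) _) hp.1
      have hp1 : p < 1 := lt_of_lt_of_le hp.2 (cdf_le_one (μ := μ₂) _)
      rw [hq₁, hq₂]
      calc sInf {z : ℝ | p < cdf μ₂ z} ≤ (q:ℝ) :=
            csInf_le (qset_bddBelow hp0) hp.2
        _ < sInf {z : ℝ | p < cdf μ₁ z} := lt_qset_sInf hp1 hp.1
end
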